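/- For any ε > 0 there exist β > 1 and n₀ such that every finite connected graph G on n ≥ n₀ vertices having (β, β^{−1})-expansion satisfies spr(G) < 1/4 + ε. -/

import Mathlib

open Filter Topology

noncomputable section

namespace SpreadPaper

/-- `f` is a Lipschitz function on the graph `G`. -/
def IsLip {V : Type*} (G : SimpleGraph V) (f : V → ℝ) : Prop :=
  ∀ v w, G.Adj v w → |f v - f w| ≤ 1

/-- The variance of `f X` where `X` is a uniformly random vertex. -/
def fvar {V : Type*} (f : V → ℝ) : ℝ :=
  (∑ᶠ v, f v ^ 2) / (Nat.card V) - ((∑ᶠ v, f v) / (Nat.card V)) ^ 2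

/-- The spread of a graph: the supremum of variances of Lipschitz functions. -/
def spread {V : Type*} (G : SimpleGraph V) : ℝ :=
  sSup {r : ℝ | ∃ f : V → ℝ, IsLip G f ∧ r = fvar f}

/-- `m` is a median of `f`. -/
def IsMedian {V : Type*} (f : V → ℝ) (m : ℝ) : Prop :=
  (Nat.card V : ℝ) / 2 ≤ ({v | m ≤ f v}.ncard : ℝ) ∧
    (Nat.card V : ℝ) / 2 ≤ ({v | f v ≤ m}.ncard : ℝ)

/-- `G` is `d`-regular. -/
def IsReg {V : Type*} (G : SimpleGraph V) (d : ℕ) : Prop :=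
  ∀ v, {w | G.Adj v w}.ncard = d

/-- The probability that a uniformly random `d`-regular simple graph
on `n` labelled vertices satisfies `P`. -/
def regProb (n d : ℕ) (P : SimpleGraph (Fin n) → Prop) : ℝ :=
  ({G : SimpleGraph (Fin n) | IsReg G d ∧ P G}.ncard : ℝ) /
    ({G : SimpleGraph (Fin n) | IsReg G d}.ncard : ℝ)

/-- `P` holds with high probability for the random `d`-regular graph `G(n,d)`,
as `n → ∞` along those `n` for which `n * d` is even. -/
def WhpReg (d : ℕ) (P : ∀ n, SimpleGraph (Fin n) → Prop) : Prop :=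
  Tendsto (fun n => regProb n d (P n)) (atTop ⊓ 𝓟 {n | Even (n * d)}) (𝓝 1)

/-- The probability of the event `A` under the Erdős–Rényi model `G(n,p)`,
where each of the possible edges is present independently with probability `p`. -/
def erProb (n : ℕ) (p : ℝ) (A : Set (SimpleGraph (Fin n))) : ℝ :=
  ∑ᶠ G ∈ A, p ^ G.edgeSet.ncard * (1 - p) ^ (n.choose 2 - G.edgeSet.ncard)

/-- The events `A n` hold with high probability under `G(n, p n)`. -/
def WhpER (p : ℕ → ℝ) (A : ∀ n, Set (SimpleGraph (Fin n))) : Prop :=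
  Tendsto (fun n => erProb n (p n) (A n)) atTop (𝓝 1)

/-- `S` is the vertex set of a largest connected component of `G`. -/
def IsLargestComponent {V : Type*} (G : SimpleGraph V) (S : Set V) : Prop :=
  ∃ c : G.ConnectedComponent, S = c.supp ∧
    ∀ c' : G.ConnectedComponent, c'.supp.ncard ≤ c.supp.ncard

/-- `∑_{v ∈ A} deg(v)`, as the number of pairs `(v,w)` with `v ∈ A` and `vw` an edge. -/
def degSum {V : Type*} (G : SimpleGraph V) (A : Set V) : ℕ :=
  {p : V × V | p.1 ∈ A ∧ G.Adj p.1 p.2}.ncard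

/-- `|E(A,B)|`: the number of edges with one endpoint in `A` and the other in `B`. -/
def cutEdges {V : Type*} (G : SimpleGraph V) (A B : Set V) : ℕ :=
  {e | e ∈ G.edgeSet ∧ ∃ a ∈ A, ∃ b ∈ B, e = s(a, b)}.ncard

/-- The number of edges of `G` with both endpoints in `A`. -/
def edgesWithin {V : Type*} (G : SimpleGraph V) (A : Set V) : ℕ :=
  {e | e ∈ G.edgeSet ∧ ∀ v ∈ e, v ∈ A}.ncard

/-- The Cheeger constant `Φ(G)`. -/
def cheeger {V : Type*} (G : SimpleGraph V) : ℝ :=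
  sInf {r : ℝ | ∃ A : Set V, A.Nonempty ∧ degSum G A ≤ G.edgeSet.ncard ∧
    r = (cutEdges G A Aᶜ : ℝ) / (degSum G A : ℝ)}

/-- `G` is an `α`-expander: every `W` with `|W| ≤ |V|/2` contains at least `α|W|`
vertices having a neighbour outside `W`. -/
def IsExpander {V : Type*} (G : SimpleGraph V) (α : ℝ) : Prop :=
  ∀ W : Set V, (W.ncard : ℝ) ≤ (Nat.card V : ℝ) / 2 →
    α * W.ncard ≤ ({v | v ∈ W ∧ ∃ u, u ∉ W ∧ G.Adj v u}.ncard : ℝ)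

/-- `G` has `(β,η)`-expansion: `|T ∪ N(T)| ≥ β|T|` whenever `|T| ≤ (1-η)|V|/β`. -/
def HasExpansion {V : Type*} (G : SimpleGraph V) (β η : ℝ) : Prop :=
  ∀ T : Set V, (T.ncard : ℝ) ≤ (1 - η) * (Nat.card V) / β →
    β * T.ncard ≤ ((T ∪ {v | ∃ u ∈ T, G.Adj u v}).ncard : ℝ)

/-- The vertex set of the 2-core of `G`: the maximal set all of whose vertices have
at least two neighbours inside the set. -/
def coreSet {V : Type*} (G : SimpleGraph V) : Set V :=
  ⋃₀ {A : Set V | ∀ v ∈ A, 2 ≤ {w | w ∈ A ∧ G.Adj v w}.ncard}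

section SpreadProof

open Finset

private lemma ncard_setOf {V : Type} [Fintype V] (P : V → Prop) [DecidablePred P] :
    {v | P v}.ncard = (Finset.univ.filter (fun v => P v)).card := by
  rw [Set.ncard_eq_toFinset_card', Set.toFinset_setOf]

private lemma sum_indicator_eq {V : Type} [Fintype V] (P : V → Prop) [DecidablePred P] :
    (∑ v, if P v then (1:ℝ) else 0) = ({v | P v}.ncard : ℝ) := by
  rw [Finset.sum_boole, ncard_setOf]

private lemma fvar_le {V : Type} [Fintype V] [Nonempty V] (f : V → ℝ) (c : ℝ) :
    fvar f ≤ (∑ v, (f v - c)^2) / (Nat.card V : ℝ) := by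
  have hn : (0:ℝ) < (Nat.card V : ℝ) := by
    rw [Nat.card_eq_fintype_card]; exact_mod_cast Fintype.card_pos
  have key : ∑ v, (f v - c)^2
      = (∑ v, (f v)^2) - 2*c*(∑ v, f v) + (Nat.card V : ℝ)*c^2 := by
    rw [Finset.sum_congr rfl (fun v _ => by ring :
      ∀ v ∈ Finset.univ, (f v - c)^2 = (f v)^2 - 2*c*f v + c^2)]
    rw [Finset.sum_add_distrib, Finset.sum_sub_distrib, ← Finset.mul_sum,
      Finset.sum_const, nsmul_eq_mul, Finset.card_univ, Nat.card_eq_fintype_card]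
  have iden : (∑ v, (f v - c)^2) / (Nat.card V : ℝ)
      = fvar f + ((∑ v, f v)/(Nat.card V : ℝ) - c)^2 := by
    rw [key, fvar, finsum_eq_sum_of_fintype, finsum_eq_sum_of_fintype]
    field_simp
    ring
  rw [iden]
  nlinarith [sq_nonneg ((∑ v, f v)/(Nat.card V : ℝ) - c)]

private lemma exists_median {V : Type} [Fintype V] [Nonempty V] (f : V → ℝ) :
    ∃ m, IsMedian f m := by
  classical
  have huniv : (Finset.univ : Finset V).Nonempty := Finset.univ_nonempty
  set n := Fintype.card V with hn
  set P : V → Prop := fun v => n ≤ 2 * (Finset.univ.filter (fun w => f w ≤ f v)).card with hP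
  have hPne : (Finset.univ.filter P).Nonempty := by
    obtain ⟨v, -, hv⟩ := Finset.exists_max_image Finset.univ f huniv
    refine ⟨v, Finset.mem_filter.mpr ⟨Finset.mem_univ v, ?_⟩⟩
    have heq : Finset.univ.filter (fun w => f w ≤ f v) = Finset.univ := by
      apply Finset.filter_true_of_mem; intro w _; exact hv w (Finset.mem_univ w)
    show n ≤ 2 * _
    rw [heq, Finset.card_univ, ← hn]; omega
  obtain ⟨v₀, hv₀mem, hv₀min⟩ := Finset.exists_min_image _ f hPne
  have hv₀P : P v₀ := (Finset.mem_filter.mp hv₀mem).2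
  have hcard : (Nat.card V : ℝ) = (n : ℝ) := by rw [Nat.card_eq_fintype_card]
  have hlt : 2 * (Finset.univ.filter (fun w => f w < f v₀)).card ≤ n := by
    by_cases hne : (Finset.univ.filter (fun w => f w < f v₀)).Nonempty
    · obtain ⟨v₁, hv₁mem, hv₁max⟩ := Finset.exists_max_image _ f hne
      have hv₁lt : f v₁ < f v₀ := (Finset.mem_filter.mp hv₁mem).2
      have hv₁notP : ¬ P v₁ := by
        intro hPv₁
        have := hv₀min v₁ (Finset.mem_filter.mpr ⟨Finset.mem_univ _, hPv₁⟩)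
        linarith
      have hseteq : Finset.univ.filter (fun w => f w ≤ f v₁)
          = Finset.univ.filter (fun w => f w < f v₀) := by
        apply Finset.filter_congr
        intro w _
        constructor
        · intro h; exact lt_of_le_of_lt h hv₁lt
        · intro h; exact hv₁max w (Finset.mem_filter.mpr ⟨Finset.mem_univ _, h⟩)
      rw [hP] at hv₁notP
      simp only [hseteq, not_le] at hv₁notP
      omega
    · rw [Finset.not_nonempty_iff_eq_empty] at hne
      rw [hne]
      simp
  refine ⟨f v₀, ?_, ?_⟩
  · have hcompl : (Finset.univ.filter (fun w => f v₀ ≤ f w)).card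
        = n - (Finset.univ.filter (fun w => f w < f v₀)).card := by
      have h2 := Finset.card_filter_add_card_filter_not
        (s := (Finset.univ : Finset V)) (p := fun w => f w < f v₀)
      have heq : Finset.univ.filter (fun w => ¬ (f w < f v₀))
          = Finset.univ.filter (fun w => f v₀ ≤ f w) := by
        apply Finset.filter_congr; intro w _; simp [not_lt]
      rw [heq, Finset.card_univ, ← hn] at h2
      omega
    rw [ncard_setOf, hcard, hcompl, div_le_iff₀ (by norm_num : (0:ℝ) < 2)]
    exact_mod_cast (by omega :
      n ≤ (n - (Finset.univ.filter (fun w => f w < f v₀)).card) * 2)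
  · rw [ncard_setOf, hcard, div_le_iff₀ (by norm_num : (0:ℝ) < 2)]
    rw [hP] at hv₀P
    exact_mod_cast (by omega : n ≤ (Finset.univ.filter (fun w => f w ≤ f v₀)).card * 2)

variable {V : Type} [Fintype V] {G : SimpleGraph V} {β : ℝ}

private lemma neg_lip {g : V → ℝ} (hg : IsLip G g) : IsLip G (fun v => -g v) := by
  intro v w h
  rw [show -g v - -g w = -(g v - g w) by ring, abs_neg]
  exact hg v w h

private lemma push (hexp : HasExpansion G β β⁻¹) (S U : Set V)
    (hSU : S ⊆ U) (hadj : ∀ v ∈ S, ∀ w, G.Adj v w → w ∈ U)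
    (hS : (S.ncard : ℝ) ≤ (1 - β⁻¹) * (Nat.card V) / β) :
    β * S.ncard ≤ (U.ncard : ℝ) := by
  refine (hexp S hS).trans ?_
  have hsub : (S ∪ {v | ∃ u ∈ S, G.Adj u v}) ⊆ U := by
    rintro v (hv | ⟨u, hu, ha⟩)
    · exact hSU hv
    · exact hadj u hu v ha
  exact_mod_cast Set.ncard_le_ncard hsub (Set.toFinite U)

private lemma pushSub (hexp : HasExpansion G β β⁻¹) (hβ : 1 ≤ β) (S U : Set V)
    (hSU : S ⊆ U) (hadj : ∀ v ∈ S, ∀ w, G.Adj v w → w ∈ U)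
    (hS : ((⌊(1 - β⁻¹) * (Nat.card V : ℝ) / β⌋₊ : ℝ)) ≤ (S.ncard : ℝ)) :
    β * (⌊(1 - β⁻¹) * (Nat.card V : ℝ) / β⌋₊ : ℝ) ≤ (U.ncard : ℝ) := by
  have hβ0 : 0 < β := lt_of_lt_of_le one_pos hβ
  have hθ0 : 0 ≤ (1 - β⁻¹) * (Nat.card V : ℝ) / β := by
    apply div_nonneg _ hβ0.le
    apply mul_nonneg _ (Nat.cast_nonneg _)
    have : β⁻¹ ≤ 1 := inv_le_one_of_one_le₀ hβ
    linarith
  have hκ : ⌊(1 - β⁻¹) * (Nat.card V : ℝ) / β⌋₊ ≤ S.ncard := by exact_mod_cast hS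
  obtain ⟨T, hTS, hT⟩ := Set.exists_subset_card_eq hκ
  have hp := push hexp T U (hTS.trans hSU) (fun v hv w hw => hadj v (hTS hv) w hw)
    (by rw [hT]; exact Nat.floor_le hθ0)
  rw [hT] at hp
  exact hp

private lemma starA (hexp : HasExpansion G β β⁻¹) (hβ : 1 ≤ β)
    (g : V → ℝ) (hg : IsLip G g) {t s : ℝ} (hts : 1 < t + s)
    (h : ((⌊(1 - β⁻¹) * (Nat.card V : ℝ) / β⌋₊ : ℝ)) ≤ ({v | t ≤ g v}.ncard : ℝ)) :
    ({v | g v ≤ -s}.ncard : ℝ) ≤ (Nat.card V : ℝ) / β + β := by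
  have hβ0 : 0 < β := lt_of_lt_of_le one_pos hβ
  have hU := pushSub hexp hβ {v | t ≤ g v} {v | t - 1 ≤ g v}
    (fun v hv => by simp only [Set.mem_setOf_eq] at *; linarith)
    (fun v hv w hw => by
      simp only [Set.mem_setOf_eq] at *
      have := abs_le.mp (hg v w hw)
      linarith) h
  have hdisj : Disjoint {v | t - 1 ≤ g v} {v | g v ≤ -s} := by
    rw [Set.disjoint_left]
    intro v h1 h2
    simp only [Set.mem_setOf_eq] at h1 h2
    linarith
  have hsum : ({v | t - 1 ≤ g v}.ncard : ℝ) + ({v | g v ≤ -s}.ncard : ℝ)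
      ≤ (Nat.card V : ℝ) := by
    have he := Set.ncard_union_eq hdisj (Set.toFinite _) (Set.toFinite _)
    have hle := Set.ncard_le_ncard
      (Set.subset_univ ({v | t - 1 ≤ g v} ∪ {v | g v ≤ -s})) (Set.toFinite _)
    rw [Set.ncard_univ, he] at hle
    exact_mod_cast hle
  have hfl : (1 - β⁻¹) * (Nat.card V : ℝ) / β - 1
      < (⌊(1 - β⁻¹) * (Nat.card V : ℝ) / β⌋₊ : ℝ) := by
    have := Nat.lt_floor_add_one ((1 - β⁻¹) * (Nat.card V : ℝ) / β)
    linarith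
  have h4 : β * ((1 - β⁻¹) * (Nat.card V : ℝ) / β - 1)
      < β * (⌊(1 - β⁻¹) * (Nat.card V : ℝ) / β⌋₊ : ℝ) :=
    mul_lt_mul_of_pos_left hfl hβ0
  have h5 : β * ((1 - β⁻¹) * (Nat.card V : ℝ) / β - 1)
      = (Nat.card V : ℝ) - (Nat.card V : ℝ) / β - β := by
    field_simp
  linarith [hU, hsum, h4]

private lemma starB (hexp : HasExpansion G β β⁻¹) (hβ : 1 ≤ β)
    (g : V → ℝ) (hg : IsLip G g) {t s : ℝ} (hts : 1 < t + s)
    (h : ((⌊(1 - β⁻¹) * (Nat.card V : ℝ) / β⌋₊ : ℝ)) ≤ ({v | g v ≤ -t}.ncard : ℝ)) :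
    ({v | s ≤ g v}.ncard : ℝ) ≤ (Nat.card V : ℝ) / β + β := by
  have h1 : {v | t ≤ -g v} = {v | g v ≤ -t} := by ext v; simp [le_neg]
  have h2 := starA hexp hβ (fun v => -g v) (neg_lip hg) hts
    (by rw [show {v | t ≤ -g v} = {v | g v ≤ -t} from h1]; exact h)
  have h3 : {v | -g v ≤ -s} = {v | s ≤ g v} := by ext v; simp [neg_le_neg_iff]
  rwa [show {v | -g v ≤ -s} = {v | s ≤ g v} from h3] at h2

private lemma theta_nonneg (hβ : 1 ≤ β) (nR : ℝ) (hnR : 0 ≤ nR) :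
    0 ≤ (1 - β⁻¹) * nR / β := by
  have hβ0 : 0 < β := lt_of_lt_of_le one_pos hβ
  have : β⁻¹ ≤ 1 := inv_le_one_of_one_le₀ hβ
  apply div_nonneg _ hβ0.le
  apply mul_nonneg _ hnR
  linarith

private lemma floor_theta_le (hβ : 1 ≤ β) (nR : ℝ) (hnR : 0 ≤ nR) :
    (⌊(1 - β⁻¹) * nR / β⌋₊ : ℝ) ≤ nR / β := by
  have hβ0 : 0 < β := lt_of_lt_of_le one_pos hβ
  refine (Nat.floor_le (theta_nonneg hβ nR hnR)).trans ?_
  apply div_le_div_of_nonneg_right _ hβ0.le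
  nlinarith [inv_nonneg.mpr hβ0.le]

private lemma ncard_disj_sum (A B : Set V) (h : ∀ v, v ∈ A → v ∈ B → False) :
    (A.ncard : ℝ) + (B.ncard : ℝ) ≤ (Nat.card V : ℝ) := by
  have hdisj : Disjoint A B := by
    rw [Set.disjoint_left]; exact fun {v} hv hv' => h v hv hv'
  have he := Set.ncard_union_eq hdisj (Set.toFinite _) (Set.toFinite _)
  have hle := Set.ncard_le_ncard (Set.subset_univ (A ∪ B)) (Set.toFinite _)
  rw [Set.ncard_univ, he] at hle
  exact_mod_cast hle

private lemma highA (hexp : HasExpansion G β β⁻¹) (hβ4 : 4 ≤ β)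
    (g : V → ℝ) (hg : IsLip G g)
    (hMb : (Nat.card V : ℝ)/2 ≤ ({v | g v ≤ 0}.ncard : ℝ))
    {t : ℝ} (ht : 1 < t) :
    ({v | t ≤ g v}.ncard : ℝ) ≤ (Nat.card V : ℝ)/β + β := by
  have hβ : 1 ≤ β := by linarith
  have hnR : (0:ℝ) ≤ (Nat.card V : ℝ) := Nat.cast_nonneg _
  apply starB hexp hβ g hg (t := 0) (s := t) (by linarith)
  rw [show {v | g v ≤ -(0:ℝ)} = {v | g v ≤ 0} from by norm_num]
  refine (floor_theta_le hβ _ hnR).trans (le_trans ?_ hMb)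
  apply div_le_div_of_nonneg_left hnR (by norm_num) (by linarith)

private lemma highB (hexp : HasExpansion G β β⁻¹) (hβ4 : 4 ≤ β)
    (g : V → ℝ) (hg : IsLip G g)
    (hMa : (Nat.card V : ℝ)/2 ≤ ({v | (0:ℝ) ≤ g v}.ncard : ℝ))
    {t : ℝ} (ht : 1 < t) :
    ({v | g v ≤ -t}.ncard : ℝ) ≤ (Nat.card V : ℝ)/β + β := by
  have hβ : 1 ≤ β := by linarith
  have hnR : (0:ℝ) ≤ (Nat.card V : ℝ) := Nat.cast_nonneg _
  apply starA hexp hβ g hg (t := 0) (s := t) (by linarith)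
  refine (floor_theta_le hβ _ hnR).trans (le_trans ?_ hMa)
  apply div_le_div_of_nonneg_left hnR (by norm_num) (by linarith)

private lemma a2A (hexp : HasExpansion G β β⁻¹) (hβ4 : 4 ≤ β)
    (g : V → ℝ) (hg : IsLip G g)
    (hMb : (Nat.card V : ℝ)/2 ≤ ({v | g v ≤ 0}.ncard : ℝ))
    (hn : 4 * β < (Nat.card V : ℝ)) :
    ({v | (2:ℝ) ≤ g v}.ncard : ℝ) ≤ (1 - β⁻¹) * (Nat.card V : ℝ) / β := by
  have hβ : 1 ≤ β := by linarith
  have hβ0 : 0 < β := by linarith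
  have hnR : (0:ℝ) ≤ (Nat.card V : ℝ) := Nat.cast_nonneg _
  by_contra hcon
  push_neg at hcon
  have hκ : ((⌊(1 - β⁻¹) * (Nat.card V : ℝ) / β⌋₊ : ℝ)) ≤ ({v | (2:ℝ) ≤ g v}.ncard : ℝ) :=
    le_trans (Nat.floor_le (theta_nonneg hβ _ hnR)) hcon.le
  have hU := pushSub hexp hβ {v | (2:ℝ) ≤ g v} {v | (1:ℝ) ≤ g v}
    (fun v hv => by simp only [Set.mem_setOf_eq] at *; linarith)
    (fun v hv w hw => by
      simp only [Set.mem_setOf_eq] at *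
      have := abs_le.mp (hg v w hw)
      linarith) hκ
  have hhalf : ({v | (1:ℝ) ≤ g v}.ncard : ℝ) ≤ (Nat.card V : ℝ)/2 := by
    have := ncard_disj_sum {v | (1:ℝ) ≤ g v} {v | g v ≤ 0}
      (fun v h1 h2 => by simp only [Set.mem_setOf_eq] at h1 h2; linarith)
    linarith
  have hfl : (1 - β⁻¹) * (Nat.card V : ℝ) / β - 1
      < (⌊(1 - β⁻¹) * (Nat.card V : ℝ) / β⌋₊ : ℝ) := by
    have := Nat.lt_floor_add_one ((1 - β⁻¹) * (Nat.card V : ℝ) / β)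
    linarith
  have h4 : β * ((1 - β⁻¹) * (Nat.card V : ℝ) / β - 1)
      < β * (⌊(1 - β⁻¹) * (Nat.card V : ℝ) / β⌋₊ : ℝ) :=
    mul_lt_mul_of_pos_left hfl hβ0
  have h5 : β * ((1 - β⁻¹) * (Nat.card V : ℝ) / β - 1)
      = (Nat.card V : ℝ) - (Nat.card V : ℝ) / β - β := by
    field_simp
  have h6 : (Nat.card V : ℝ)/β ≤ (Nat.card V : ℝ)/4 :=
    div_le_div_of_nonneg_left hnR (by norm_num) hβ4
  linarith [hU, h4]

private lemma decayA (hexp : HasExpansion G β β⁻¹) (hβ4 : 4 ≤ β)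
    (g : V → ℝ) (hg : IsLip G g)
    (hMb : (Nat.card V : ℝ)/2 ≤ ({v | g v ≤ 0}.ncard : ℝ))
    (hn : 4 * β < (Nat.card V : ℝ)) :
    ∀ j : ℕ, ({v | (j:ℝ)+2 ≤ g v}.ncard : ℝ) * β^j
      ≤ (1 - β⁻¹) * (Nat.card V : ℝ) / β := by
  have hβ : 1 ≤ β := by linarith
  have hβ0 : 0 < β := by linarith
  intro j
  induction j with
  | zero =>
    rw [show {v | ((0:ℕ):ℝ)+2 ≤ g v} = {v | (2:ℝ) ≤ g v} from by norm_num]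
    rw [pow_zero, mul_one]
    exact a2A hexp hβ4 g hg hMb hn
  | succ j ih =>
    have hone : (1:ℝ) ≤ β^j := by apply one_le_pow₀ hβ
    have hjth : ({v | (j:ℝ)+2 ≤ g v}.ncard : ℝ) ≤ (1 - β⁻¹) * (Nat.card V : ℝ) / β := by
      have hnn : (0:ℝ) ≤ ({v | (j:ℝ)+2 ≤ g v}.ncard : ℝ) := Nat.cast_nonneg _
      nlinarith [ih, hone, hnn]
    have hmono : {v | ((j:ℕ)+1:ℝ)+2 ≤ g v} ⊆ {v | (j:ℝ)+2 ≤ g v} := by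
      intro v hv
      simp only [Set.mem_setOf_eq] at *
      linarith
    have hSle : ({v | ((j:ℕ)+1:ℝ)+2 ≤ g v}.ncard : ℝ) ≤ (1 - β⁻¹) * (Nat.card V : ℝ) / β := by
      refine le_trans ?_ hjth
      exact_mod_cast Set.ncard_le_ncard hmono (Set.toFinite _)
    have hp := push hexp {v | ((j:ℕ)+1:ℝ)+2 ≤ g v} {v | (j:ℝ)+2 ≤ g v} hmono
      (fun v hv w hw => by
        simp only [Set.mem_setOf_eq] at *
        have := abs_le.mp (hg v w hw)
        linarith) hSle
    have hcast : (((j:ℕ)+1:ℕ):ℝ) = ((j:ℕ):ℝ) + 1 := by push_cast; ring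
    rw [show {v | (((j:ℕ)+1:ℕ):ℝ)+2 ≤ g v} = {v | ((j:ℕ)+1:ℝ)+2 ≤ g v} from by rw [hcast]]
    calc ({v | ((j:ℕ)+1:ℝ)+2 ≤ g v}.ncard : ℝ) * β^(j+1)
        = (β * ({v | ((j:ℕ)+1:ℝ)+2 ≤ g v}.ncard : ℝ)) * β^j := by ring
      _ ≤ ({v | (j:ℝ)+2 ≤ g v}.ncard : ℝ) * β^j :=
          mul_le_mul_of_nonneg_right hp (by positivity)
      _ ≤ (1 - β⁻¹) * (Nat.card V : ℝ) / β := ih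

private lemma decayB (hexp : HasExpansion G β β⁻¹) (hβ4 : 4 ≤ β)
    (g : V → ℝ) (hg : IsLip G g)
    (hMa : (Nat.card V : ℝ)/2 ≤ ({v | (0:ℝ) ≤ g v}.ncard : ℝ))
    (hn : 4 * β < (Nat.card V : ℝ)) :
    ∀ j : ℕ, ({v | g v ≤ -((j:ℝ)+2)}.ncard : ℝ) * β^j
      ≤ (1 - β⁻¹) * (Nat.card V : ℝ) / β := by
  intro j
  have hMb' : (Nat.card V : ℝ)/2 ≤ ({v | (fun v => -g v) v ≤ 0}.ncard : ℝ) := by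
    rw [show {v | (fun v => -g v) v ≤ 0} = {v | (0:ℝ) ≤ g v} from by
      ext v; simp]
    exact hMa
  have h := decayA hexp hβ4 (fun v => -g v) (neg_lip hg) hMb' hn j
  rwa [show {v | (j:ℝ)+2 ≤ (fun v => -g v) v} = {v | g v ≤ -((j:ℝ)+2)} from by
    ext v; simp only [Set.mem_setOf_eq]; constructor <;> intro <;> linarith] at h

private lemma choose_s (hexp : HasExpansion G β β⁻¹) (hβ4 : 4 ≤ β)
    (g : V → ℝ) (hg : IsLip G g)
    (hMa : (Nat.card V : ℝ)/2 ≤ ({v | (0:ℝ) ≤ g v}.ncard : ℝ))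
    (hMb : (Nat.card V : ℝ)/2 ≤ ({v | g v ≤ 0}.ncard : ℝ))
    {γ : ℝ} (hγ0 : 0 < γ) :
    ∃ s : ℝ, 0 ≤ s ∧ s ≤ 1 + γ ∧
      ({v | g v ≤ -(s+γ)}.ncard : ℝ) ≤ (Nat.card V : ℝ)/β + β ∧
      ({v | 1 - s + γ ≤ g v}.ncard : ℝ) ≤ (Nat.card V : ℝ)/β + β := by
  have hβ : 1 ≤ β := by linarith
  have hβ0 : 0 < β := by linarith
  have hnR : (0:ℝ) ≤ (Nat.card V : ℝ) := Nat.cast_nonneg _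
  have hθδ : (⌊(1 - β⁻¹) * (Nat.card V : ℝ) / β⌋₊ : ℝ) ≤ (Nat.card V : ℝ)/β + β :=
    (floor_theta_le hβ _ hnR).trans (by linarith)
  have key : ∀ j : ℕ, (j:ℝ)*γ ≤ 1 + γ →
      ({v | g v ≤ -((j:ℝ)*γ+γ)}.ncard : ℝ) ≤ (Nat.card V : ℝ)/β + β →
      ∃ s : ℝ, 0 ≤ s ∧ s ≤ 1 + γ ∧
        ({v | g v ≤ -(s+γ)}.ncard : ℝ) ≤ (Nat.card V : ℝ)/β + β ∧
        ({v | 1 - s + γ ≤ g v}.ncard : ℝ) ≤ (Nat.card V : ℝ)/β + β := by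
    intro j
    induction j with
    | zero =>
      intro _ h0
      refine ⟨0, le_refl _, by linarith, ?_, ?_⟩
      · rw [show -((0:ℝ)+γ) = -(((0:ℕ):ℝ)*γ+γ) from by push_cast; ring]
        exact h0
      · rw [show (1:ℝ) - 0 + γ = 1 + γ from by ring]
        exact highA hexp hβ4 g hg hMb (by linarith)
    | succ j ih =>
      intro hle hsucc
      by_cases hc : ({v | g v ≤ -((j:ℝ)*γ+γ)}.ncard : ℝ) ≤ (Nat.card V : ℝ)/β + β
      · refine ih ?_ hc
        push_cast at hle ⊢
        nlinarith
      · push_neg at hc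
        refine ⟨((j:ℝ)+1)*γ, by positivity, ?_, ?_, ?_⟩
        · push_cast at hle; linarith
        · rw [show -(((j:ℝ)+1)*γ+γ) = -((((j:ℕ)+1:ℕ):ℝ)*γ+γ) from by push_cast; ring]
          exact hsucc
        · have hstar := starB hexp hβ g hg
            (t := (j:ℝ)*γ+γ) (s := 1 - ((j:ℝ)+1)*γ + γ)
            (by ring_nf; nlinarith [hγ0])
            (le_trans hθδ hc.le)
          exact hstar
  have hJ := key (⌈1/γ⌉₊)
  have hJ1 : ((⌈1/γ⌉₊:ℕ):ℝ)*γ ≤ 1 + γ := by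
    have h1 : ((⌈1/γ⌉₊:ℕ):ℝ) < 1/γ + 1 := Nat.ceil_lt_add_one (by positivity)
    have h2 : (1/γ) * γ = 1 := by field_simp
    nlinarith
  have hJ2 : ({v | g v ≤ -(((⌈1/γ⌉₊:ℕ):ℝ)*γ+γ)}.ncard : ℝ) ≤ (Nat.card V : ℝ)/β + β := by
    apply highB hexp hβ4 g hg hMa
    have h1 : 1/γ ≤ ((⌈1/γ⌉₊:ℕ):ℝ) := Nat.le_ceil _
    have h2 : (1/γ) * γ = 1 := by field_simp
    nlinarith
  exact hJ hJ1 hJ2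

private lemma pow_helper : ∀ j : ℕ, ((j:ℝ) + 4)^2 ≤ 25 * 2^j := by
  intro j
  induction j with
  | zero => norm_num
  | succ j ih =>
    have hj : (0:ℝ) ≤ (j:ℝ) := Nat.cast_nonneg _
    push_cast [pow_succ] at *
    nlinarith [ih, hj]

private lemma geo_half (N : ℕ) : ∑ k ∈ Finset.range N, ((1:ℝ)/2)^k ≤ 2 := by
  rw [geom_sum_eq (by norm_num : (1:ℝ)/2 ≠ 1)]
  have h : (0:ℝ) ≤ ((1:ℝ)/2)^N := by positivity
  have h2 : ((1:ℝ)/2)^N ≤ 1 := pow_le_one₀ (by norm_num) (by norm_num)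
  rw [div_le_iff_of_neg (by norm_num : ((1:ℝ)/2 - 1) < 0)]
  linarith

private lemma pointwise (γ s x : ℝ) (N : ℕ) (hγ0 : 0 < γ) (hγ : γ ≤ 1/4)
    (hs0 : 0 ≤ s) (hs1 : s ≤ 1 + γ) (hxN : |x| < (N:ℝ) + 2) :
    (x - (1/2 - s))^2 ≤ (1/2+γ)^2
      + 13 * ((if 1 - s + γ ≤ x then (1:ℝ) else 0) + (if x ≤ -(s+γ) then (1:ℝ) else 0))
      + ∑ k ∈ Finset.range N, 25 * 2^k *
          ((if ((k:ℝ)+2) ≤ x then (1:ℝ) else 0) + (if x ≤ -((k:ℝ)+2) then (1:ℝ) else 0)) := by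
  classical
  have habs := abs_lt.mp hxN
  have hterm_nonneg : ∀ k ∈ Finset.range N, (0:ℝ) ≤ 25 * 2^k *
      ((if ((k:ℝ)+2) ≤ x then (1:ℝ) else 0) + (if x ≤ -((k:ℝ)+2) then (1:ℝ) else 0)) := by
    intro k _
    apply mul_nonneg (by positivity)
    apply add_nonneg <;> split <;> norm_num
  have hsum0 : (0:ℝ) ≤ ∑ k ∈ Finset.range N, 25 * 2^k *
      ((if ((k:ℝ)+2) ≤ x then (1:ℝ) else 0) + (if x ≤ -((k:ℝ)+2) then (1:ℝ) else 0)) :=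
    Finset.sum_nonneg hterm_nonneg
  have hi1 : (0:ℝ) ≤ (if 1 - s + γ ≤ x then (1:ℝ) else 0) := by split <;> norm_num
  have hi2 : (0:ℝ) ≤ (if x ≤ -(s+γ) then (1:ℝ) else 0) := by split <;> norm_num
  rcases le_or_gt x (1 - s + γ) with h1 | h1
  · rcases le_or_gt (-(s+γ)) x with h2 | h2
    · have hmain : (x - (1/2 - s))^2 ≤ (1/2+γ)^2 :=
        sq_le_sq' (by linarith) (by linarith)
      linarith
    · have hif2 : (if x ≤ -(s+γ) then (1:ℝ) else 0) = 1 := if_pos h2.le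
      rcases le_or_gt (-2) x with h3 | h3
      · have hmain : (x - (1/2 - s))^2 ≤ (5/2)^2 :=
          sq_le_sq' (by linarith) (by linarith)
        rw [hif2]
        nlinarith [hsum0, hi1]
      · set K := ⌊-x⌋₊ with hK
        have hx0 : (0:ℝ) ≤ -x := by linarith
        have hK2 : 2 ≤ K := Nat.le_floor (by push_cast; linarith)
        have hKle : (K:ℝ) ≤ -x := Nat.floor_le hx0
        have hKlt : -x < (K:ℝ) + 1 := Nat.lt_floor_add_one _
        have hKN : K - 2 < N := by
          have hr : (K:ℝ) < (N:ℝ) + 2 := by linarith [habs.1]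
          have : K < N + 2 := by exact_mod_cast hr
          omega
        have hmem : K - 2 ∈ Finset.range N := Finset.mem_range.mpr hKN
        have hcast : ((K - 2 : ℕ):ℝ) = (K:ℝ) - 2 := by
          push_cast [Nat.cast_sub hK2]
          ring
        have hifB : (if x ≤ -(((K-2:ℕ):ℝ)+2) then (1:ℝ) else 0) = 1 := by
          apply if_pos
          rw [hcast]
          linarith
        have hsingle : (25:ℝ) * 2^(K-2) ≤ ∑ k ∈ Finset.range N, 25 * 2^k *
            ((if ((k:ℝ)+2) ≤ x then (1:ℝ) else 0) + (if x ≤ -((k:ℝ)+2) then (1:ℝ) else 0)) := by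
          refine le_trans ?_ (Finset.single_le_sum hterm_nonneg hmem)
          rw [hifB]
          have hz : (0:ℝ) ≤ (if (((K-2:ℕ):ℝ)+2) ≤ x then (1:ℝ) else 0) := by split <;> norm_num
          have h20 : (0:ℝ) ≤ 25 * 2^(K-2) := by positivity
          calc (25:ℝ) * 2^(K-2) = 25 * 2^(K-2) * 1 := by ring
            _ ≤ 25 * 2^(K-2) * ((if (((K-2:ℕ):ℝ)+2) ≤ x then (1:ℝ) else 0) + 1) :=
                mul_le_mul_of_nonneg_left (by linarith) h20
        have hph := pow_helper (K-2)
        rw [hcast] at hph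
        have hmain : (x - (1/2 - s))^2 ≤ ((K:ℝ) + 2)^2 :=
          sq_le_sq' (by linarith) (by linarith)
        have heq : ((K:ℝ) - 2 + 4)^2 = ((K:ℝ)+2)^2 := by ring
        rw [heq] at hph
        linarith [hmain, hph, hsingle, hi1, hi2, sq_nonneg (1/2+γ)]
  · have hif1 : (if 1 - s + γ ≤ x then (1:ℝ) else 0) = 1 := if_pos h1.le
    rcases le_or_gt x 2 with h3 | h3
    · have hmain : (x - (1/2 - s))^2 ≤ (11/4)^2 :=
        sq_le_sq' (by linarith) (by linarith)
      rw [hif1]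
      nlinarith [hsum0, hi2]
    · set K := ⌊x⌋₊ with hK
      have hx0 : (0:ℝ) ≤ x := by linarith
      have hK2 : 2 ≤ K := Nat.le_floor (by push_cast; linarith)
      have hKle : (K:ℝ) ≤ x := Nat.floor_le hx0
      have hKlt : x < (K:ℝ) + 1 := Nat.lt_floor_add_one _
      have hKN : K - 2 < N := by
        have hr : (K:ℝ) < (N:ℝ) + 2 := by linarith [habs.2]
        have : K < N + 2 := by exact_mod_cast hr
        omega
      have hmem : K - 2 ∈ Finset.range N := Finset.mem_range.mpr hKN
      have hcast : ((K - 2 : ℕ):ℝ) = (K:ℝ) - 2 := by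
        push_cast [Nat.cast_sub hK2]
        ring
      have hifA : (if (((K-2:ℕ):ℝ)+2) ≤ x then (1:ℝ) else 0) = 1 := by
        apply if_pos
        rw [hcast]
        linarith
      have hsingle : (25:ℝ) * 2^(K-2) ≤ ∑ k ∈ Finset.range N, 25 * 2^k *
          ((if ((k:ℝ)+2) ≤ x then (1:ℝ) else 0) + (if x ≤ -((k:ℝ)+2) then (1:ℝ) else 0)) := by
        refine le_trans ?_ (Finset.single_le_sum hterm_nonneg hmem)
        rw [hifA]
        have hz : (0:ℝ) ≤ (if x ≤ -(((K-2:ℕ):ℝ)+2) then (1:ℝ) else 0) := by split <;> norm_num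
        have h20 : (0:ℝ) ≤ 25 * 2^(K-2) := by positivity
        calc (25:ℝ) * 2^(K-2) = 25 * 2^(K-2) * 1 := by ring
          _ ≤ 25 * 2^(K-2) * (1 + (if x ≤ -(((K-2:ℕ):ℝ)+2) then (1:ℝ) else 0)) :=
              mul_le_mul_of_nonneg_left (by linarith) h20
      have hph := pow_helper (K-2)
      rw [hcast] at hph
      have hmain : (x - (1/2 - s))^2 ≤ ((K:ℝ) + 2)^2 :=
        sq_le_sq' (by linarith) (by linarith)
      have heq : ((K:ℝ) - 2 + 4)^2 = ((K:ℝ)+2)^2 := by ring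
      rw [heq] at hph
      linarith [hmain, hph, hsingle, hi1, hi2, sq_nonneg (1/2+γ)]

set_option maxHeartbeats 1000000 in
private lemma fvar_bound [Nonempty V] (hexp : HasExpansion G β β⁻¹) (hβ4 : 4 ≤ β)
    (hn : 4 * β < (Nat.card V : ℝ))
    {γ : ℝ} (hγ0 : 0 < γ) (hγ : γ ≤ 1/4)
    (f : V → ℝ) (hf : IsLip G f) :
    fvar f ≤ (1/2+γ)^2 + 26/β + 26*β/(Nat.card V : ℝ) + 100/β := by
  classical
  have hβ : 1 ≤ β := by linarith
  have hβ0 : 0 < β := by linarith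
  have hnR : (0:ℝ) < (Nat.card V : ℝ) := by
    rw [Nat.card_eq_fintype_card]; exact_mod_cast Fintype.card_pos
  obtain ⟨m, hMed⟩ := exists_median f
  set g : V → ℝ := fun v => f v - m with hgdef
  have hg : IsLip G g := by
    intro v w h
    have := hf v w h
    rw [show g v - g w = f v - f w from by rw [hgdef]; ring]
    exact this
  have hMa : (Nat.card V : ℝ)/2 ≤ ({v | (0:ℝ) ≤ g v}.ncard : ℝ) := by
    rw [show {v | (0:ℝ) ≤ g v} = {v | m ≤ f v} from by
      ext v; simp [hgdef, sub_nonneg]]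
    exact hMed.1
  have hMb : (Nat.card V : ℝ)/2 ≤ ({v | g v ≤ 0}.ncard : ℝ) := by
    rw [show {v | g v ≤ 0} = {v | f v ≤ m} from by
      ext v; simp [hgdef, sub_nonpos]]
    exact hMed.2
  obtain ⟨s, hs0, hs1, hb, ha⟩ := choose_s hexp hβ4 g hg hMa hMb hγ0
  set N : ℕ := ⌈Finset.univ.sup' Finset.univ_nonempty (fun v => |g v|)⌉₊ with hN
  have hxN : ∀ v : V, |g v| < (N:ℝ) + 2 := by
    intro v
    have h1 : |g v| ≤ Finset.univ.sup' Finset.univ_nonempty (fun v => |g v|) :=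
      Finset.le_sup' (fun v => |g v|) (Finset.mem_univ v)
    have h2 := Nat.le_ceil (Finset.univ.sup' Finset.univ_nonempty (fun v => |g v|))
    rw [hN]
    linarith
  have step1 : fvar f ≤ (∑ v, (f v - (m + (1/2 - s)))^2)/(Nat.card V : ℝ) :=
    fvar_le f (m + (1/2 - s))
  have step2 : ∑ v, (f v - (m + (1/2 - s)))^2 = ∑ v, (g v - (1/2 - s))^2 :=
    Finset.sum_congr rfl (fun v _ => by rw [hgdef]; ring_nf)
  have step3 : ∑ v, (g v - (1/2 - s))^2
      ≤ ∑ v : V, ((1/2+γ)^2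
        + 13 * ((if 1 - s + γ ≤ g v then (1:ℝ) else 0) + (if g v ≤ -(s+γ) then (1:ℝ) else 0))
        + ∑ k ∈ Finset.range N, 25 * 2^k *
            ((if ((k:ℝ)+2) ≤ g v then (1:ℝ) else 0) + (if g v ≤ -((k:ℝ)+2) then (1:ℝ) else 0))) :=
    Finset.sum_le_sum (fun v _ => pointwise γ s (g v) N hγ0 hγ hs0 hs1 (hxN v))
  have e1 : ∑ _v : V, ((1/2+γ)^2 : ℝ) = (Nat.card V : ℝ)*(1/2+γ)^2 := by
    rw [Finset.sum_const, Finset.card_univ, nsmul_eq_mul, Nat.card_eq_fintype_card]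
  have e2 : ∑ v : V, (13 * ((if 1 - s + γ ≤ g v then (1:ℝ) else 0) + (if g v ≤ -(s+γ) then (1:ℝ) else 0)))
      = 13 * (({v | 1 - s + γ ≤ g v}.ncard : ℝ) + ({v | g v ≤ -(s+γ)}.ncard : ℝ)) := by
    rw [← Finset.mul_sum, Finset.sum_add_distrib, sum_indicator_eq, sum_indicator_eq]
  have e3 : ∑ v : V, (∑ k ∈ Finset.range N, 25 * 2^k *
        ((if ((k:ℝ)+2) ≤ g v then (1:ℝ) else 0) + (if g v ≤ -((k:ℝ)+2) then (1:ℝ) else 0)))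
      = ∑ k ∈ Finset.range N, 25 * 2^k *
        (({v | ((k:ℝ)+2) ≤ g v}.ncard : ℝ) + ({v | g v ≤ -((k:ℝ)+2)}.ncard : ℝ)) := by
    rw [Finset.sum_comm]
    apply Finset.sum_congr rfl
    intro k _
    rw [← Finset.mul_sum, Finset.sum_add_distrib, sum_indicator_eq, sum_indicator_eq]
  have hsplit : ∑ v : V, ((1/2+γ)^2
        + 13 * ((if 1 - s + γ ≤ g v then (1:ℝ) else 0) + (if g v ≤ -(s+γ) then (1:ℝ) else 0))
        + ∑ k ∈ Finset.range N, 25 * 2^k *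
            ((if ((k:ℝ)+2) ≤ g v then (1:ℝ) else 0) + (if g v ≤ -((k:ℝ)+2) then (1:ℝ) else 0)))
      = (Nat.card V : ℝ)*(1/2+γ)^2
        + 13 * (({v | 1 - s + γ ≤ g v}.ncard : ℝ) + ({v | g v ≤ -(s+γ)}.ncard : ℝ))
        + ∑ k ∈ Finset.range N, 25 * 2^k *
            (({v | ((k:ℝ)+2) ≤ g v}.ncard : ℝ) + ({v | g v ≤ -((k:ℝ)+2)}.ncard : ℝ)) := by
    rw [Finset.sum_add_distrib, Finset.sum_add_distrib, e1, e2, e3]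
  have htail : ∑ k ∈ Finset.range N, 25 * 2^k *
        (({v | ((k:ℝ)+2) ≤ g v}.ncard : ℝ) + ({v | g v ≤ -((k:ℝ)+2)}.ncard : ℝ))
      ≤ 100 * ((1 - β⁻¹) * (Nat.card V : ℝ) / β) := by
    have hθ0 : 0 ≤ (1 - β⁻¹) * (Nat.card V : ℝ) / β :=
      theta_nonneg hβ _ (Nat.cast_nonneg _)
    have hterm : ∀ k ∈ Finset.range N, 25 * 2^k *
        (({v | ((k:ℝ)+2) ≤ g v}.ncard : ℝ) + ({v | g v ≤ -((k:ℝ)+2)}.ncard : ℝ))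
        ≤ 50 * ((1 - β⁻¹) * (Nat.card V : ℝ) / β) * ((1:ℝ)/2)^k := by
      intro k _
      have hA := decayA hexp hβ4 g hg hMb hn k
      have hB := decayB hexp hβ4 g hg hMa hn k
      have hβk : (0:ℝ) < β^k := pow_pos hβ0 k
      have h2k : (0:ℝ) ≤ (2:ℝ)^k := by positivity
      have hq : ((2:ℝ)/β)^k ≤ ((1:ℝ)/2)^k := by
        apply pow_le_pow_left₀ (by positivity)
        rw [div_le_div_iff₀ hβ0 (by norm_num : (0:ℝ) < 2)]
        linarith
      have hAk : ({v | ((k:ℝ)+2) ≤ g v}.ncard : ℝ) * 2^k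
          ≤ ((1 - β⁻¹) * (Nat.card V : ℝ) / β) * ((2:ℝ)/β)^k := by
        rw [div_pow, ← mul_div_assoc, le_div_iff₀ (pow_pos hβ0 k)]
        calc ({v | ((k:ℝ)+2) ≤ g v}.ncard : ℝ) * 2^k * β^k
            = (({v | ((k:ℝ)+2) ≤ g v}.ncard : ℝ) * β^k) * 2^k := by ring
          _ ≤ ((1 - β⁻¹) * (Nat.card V : ℝ) / β) * 2^k :=
              mul_le_mul_of_nonneg_right hA h2k
      have hBk : ({v | g v ≤ -((k:ℝ)+2)}.ncard : ℝ) * 2^k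
          ≤ ((1 - β⁻¹) * (Nat.card V : ℝ) / β) * ((2:ℝ)/β)^k := by
        rw [div_pow, ← mul_div_assoc, le_div_iff₀ (pow_pos hβ0 k)]
        calc ({v | g v ≤ -((k:ℝ)+2)}.ncard : ℝ) * 2^k * β^k
            = (({v | g v ≤ -((k:ℝ)+2)}.ncard : ℝ) * β^k) * 2^k := by ring
          _ ≤ ((1 - β⁻¹) * (Nat.card V : ℝ) / β) * 2^k :=
              mul_le_mul_of_nonneg_right hB h2k
      have hup : ((1 - β⁻¹) * (Nat.card V : ℝ) / β) * ((2:ℝ)/β)^k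
          ≤ ((1 - β⁻¹) * (Nat.card V : ℝ) / β) * ((1:ℝ)/2)^k :=
        mul_le_mul_of_nonneg_left hq hθ0
      nlinarith [hAk, hBk, hup]
    calc ∑ k ∈ Finset.range N, 25 * 2^k *
          (({v | ((k:ℝ)+2) ≤ g v}.ncard : ℝ) + ({v | g v ≤ -((k:ℝ)+2)}.ncard : ℝ))
        ≤ ∑ k ∈ Finset.range N, 50 * ((1 - β⁻¹) * (Nat.card V : ℝ) / β) * ((1:ℝ)/2)^k :=
          Finset.sum_le_sum hterm
      _ = 50 * ((1 - β⁻¹) * (Nat.card V : ℝ) / β) * ∑ k ∈ Finset.range N, ((1:ℝ)/2)^k := by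
          rw [Finset.mul_sum]
      _ ≤ 50 * ((1 - β⁻¹) * (Nat.card V : ℝ) / β) * 2 := by
          apply mul_le_mul_of_nonneg_left (geo_half N) (by positivity)
      _ = 100 * ((1 - β⁻¹) * (Nat.card V : ℝ) / β) := by ring
  have hmid : 13 * (({v | 1 - s + γ ≤ g v}.ncard : ℝ) + ({v | g v ≤ -(s+γ)}.ncard : ℝ))
      ≤ 26 * ((Nat.card V : ℝ)/β + β) := by
    linarith [ha, hb]
  have htotal : ∑ v, (g v - (1/2 - s))^2
      ≤ (Nat.card V : ℝ)*(1/2+γ)^2 + 26 * ((Nat.card V : ℝ)/β + β)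
        + 100 * ((1 - β⁻¹) * (Nat.card V : ℝ) / β) := by
    rw [hsplit] at step3
    linarith [step3, htail, hmid]
  have hfinal : (Nat.card V : ℝ)*(1/2+γ)^2 + 26 * ((Nat.card V : ℝ)/β + β)
        + 100 * ((1 - β⁻¹) * (Nat.card V : ℝ) / β)
      ≤ (Nat.card V : ℝ) * ((1/2+γ)^2 + 26/β + 26*β/(Nat.card V : ℝ) + 100/β) := by
    have hx3 : 100 * ((1 - β⁻¹) * (Nat.card V : ℝ) / β) ≤ 100 * ((Nat.card V : ℝ) / β) := by
      apply mul_le_mul_of_nonneg_left _ (by norm_num)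
      apply div_le_div_of_nonneg_right _ hβ0.le
      nlinarith [inv_nonneg.mpr hβ0.le, hnR.le]
    have hrhs : (Nat.card V : ℝ) * ((1/2+γ)^2 + 26/β + 26*β/(Nat.card V : ℝ) + 100/β)
        = (Nat.card V : ℝ)*(1/2+γ)^2 + 26*((Nat.card V : ℝ)/β) + 26*β
          + 100*((Nat.card V : ℝ)/β) := by
      field_simp
    linarith [hx3, hrhs]
  rw [step2] at step1
  refine step1.trans ?_
  rw [div_le_iff₀ hnR]
  calc ∑ v, (g v - (1/2 - s))^2
      ≤ (Nat.card V : ℝ)*(1/2+γ)^2 + 26 * ((Nat.card V : ℝ)/β + β)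
        + 100 * ((1 - β⁻¹) * (Nat.card V : ℝ) / β) := htotal
    _ ≤ (Nat.card V : ℝ) * ((1/2+γ)^2 + 26/β + 26*β/(Nat.card V : ℝ) + 100/β) := hfinal
    _ = ((1/2+γ)^2 + 26/β + 26*β/(Nat.card V : ℝ) + 100/β) * (Nat.card V : ℝ) := by ring

end SpreadProof

/-- for every `ε > 0` there exist `β > 1` and `n₀` such that every
connected graph on at least `n₀` vertices with `(β, β⁻¹)`-expansion has spread
less than `1/4 + ε`. -/


theorem expansion_spread_upper (ε : ℝ) (hε : 0 < ε) :
    ∃ β : ℝ, 1 < β ∧ ∃ n₀ : ℕ, ∀ (V : Type) [Fintype V] (G : SimpleGraph V),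
      G.Connected → n₀ ≤ Fintype.card V → HasExpansion G β β⁻¹ →
        spread G < 1 / 4 + ε := by
  have hε8 : 0 < ε/8 := by linarith
  set β : ℝ := 4 + 1008/ε with hβdef
  have hβ4 : 4 ≤ β := by
    have : 0 < 1008/ε := by positivity
    rw [hβdef]; linarith
  have hβ1 : 1 < β := by linarith
  have hβ0 : 0 < β := by linarith
  refine ⟨β, hβ1, ⌈208*β/ε⌉₊ + ⌈4*β⌉₊ + 1, ?_⟩
  intro V _ G hconn hcard hexp
  have : Nonempty V := hconn.nonempty
  have hnR : (0:ℝ) < (Nat.card V : ℝ) := by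
    rw [Nat.card_eq_fintype_card]; exact_mod_cast Fintype.card_pos
  have hcardR : ((⌈208*β/ε⌉₊ + ⌈4*β⌉₊ + 1 : ℕ) : ℝ) ≤ (Nat.card V : ℝ) := by
    rw [Nat.card_eq_fintype_card]; exact_mod_cast hcard
  have hc1 : (⌈208*β/ε⌉₊ : ℝ) + (⌈4*β⌉₊ : ℝ) + 1 ≤ (Nat.card V : ℝ) := by
    push_cast at hcardR; linarith
  have hn4β : 4*β < (Nat.card V : ℝ) := by
    have h1 : 4*β ≤ (⌈4*β⌉₊ : ℝ) := Nat.le_ceil _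
    have h2 : (0:ℝ) ≤ (⌈208*β/ε⌉₊ : ℝ) := Nat.cast_nonneg _
    linarith
  have hn208 : 208*β/ε ≤ (Nat.card V : ℝ) := by
    have h1 : 208*β/ε ≤ (⌈208*β/ε⌉₊ : ℝ) := Nat.le_ceil _
    have h2 : (0:ℝ) ≤ (⌈4*β⌉₊ : ℝ) := Nat.cast_nonneg _
    linarith
  set γ : ℝ := min (1/4) (ε/8) with hγdef
  have hγ0 : 0 < γ := lt_min (by norm_num) hε8
  have hγ14 : γ ≤ 1/4 := min_le_left _ _
  have hγε : γ ≤ ε/8 := min_le_right _ _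
  have hbound : ∀ f : V → ℝ, IsLip G f → fvar f ≤ 1/4 + ε/2 := by
    intro f hf
    have h := fvar_bound hexp hβ4 hn4β hγ0 hγ14 f hf
    have c1 : (1/2+γ)^2 ≤ 1/4 + ε/4 := by nlinarith
    have c2 : 26/β + 100/β ≤ ε/8 := by
      have hβge : 1008/ε ≤ β := by rw [hβdef]; linarith
      rw [← add_div]
      rw [div_le_iff₀ hβ0]
      have h3 : (1008/ε) * (ε/8) = 126 := by field_simp; ring
      nlinarith [hβge, hε8]
    have c3 : 26*β/(Nat.card V : ℝ) ≤ ε/8 := by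
      rw [div_le_iff₀ hnR]
      have h4 : 208*β/ε * (ε/8) = 26*β := by field_simp; ring
      have h5 : 208*β/ε * (ε/8) ≤ (Nat.card V : ℝ) * (ε/8) :=
        mul_le_mul_of_nonneg_right hn208 (by linarith)
      linarith
    linarith
  have hne : {r : ℝ | ∃ f : V → ℝ, IsLip G f ∧ r = fvar f}.Nonempty := by
    refine ⟨fvar (fun _ => 0), fun _ => 0, ?_, rfl⟩
    intro v w _
    norm_num
  have hub : spread G ≤ 1/4 + ε/2 := by
    apply csSup_le hne
    rintro r ⟨f, hf, rfl⟩
    exact hbound f hf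
  calc spread G ≤ 1/4 + ε/2 := hub
    _ < 1/4 + ε := by linarith


end SpreadPaper
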